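/- Let V be a maximal isotropic ZMod 2-subspace of (Fin p → ZMod 2) × (Fin p → ZMod 2) with respect to ω. Then the joint +1 eigenspace { ψ : (Fin p → ZMod 2) → ℂ | ∀ (a,b) ∈ V, σ(a,b).mulVec ψ = ψ } is a ℂ-subspace of dimension at most 1; that is, a stabilizer state determined by a Cartanion is unique up to scalar when it exists. -/
import Mathlib


open Matrix BigOperators

/-- The mod-2 dot product of two bitstrings. -/
def dotp {p : ℕ} (a b : Fin p → ZMod 2) : ZMod 2 := ∑ i, a i * b i

/-- The sign `(-1)^t` for `t : ZMod 2`. -/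
noncomputable def sgn (t : ZMod 2) : ℂ := (-1 : ℂ) ^ t.val

/-- The Pauli spinor matrix `σ(a,b)`, representing `⊗ᵢ X^(a i) Z^(b i)`:
`σ(a,b) x y = (-1)^(b⬝x)` if `y = x + a` and `0` otherwise. -/
noncomputable def pauli {p : ℕ} (a b : Fin p → ZMod 2) :
    Matrix (Fin p → ZMod 2) (Fin p → ZMod 2) ℂ :=
  fun x y => if y = x + a then sgn (dotp b x) else 0

/-- The symplectic form `ω((a,b),(c,d)) = a⬝d + b⬝c` on pairs of bitstrings. -/
def omegaF {p : ℕ} (u v : (Fin p → ZMod 2) × (Fin p → ZMod 2)) : ZMod 2 :=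
  dotp u.1 v.2 + dotp u.2 v.1

/-- A subspace is isotropic if `ω` vanishes on all pairs of its elements. -/
def IsIsotropic {p : ℕ}
    (V : Submodule (ZMod 2) ((Fin p → ZMod 2) × (Fin p → ZMod 2))) : Prop :=
  ∀ u ∈ V, ∀ v ∈ V, omegaF u v = 0

/-- A maximal isotropic subspace: isotropic and not properly contained in any
isotropic subspace. -/
def IsMaxIsotropic {p : ℕ}
    (V : Submodule (ZMod 2) ((Fin p → ZMod 2) × (Fin p → ZMod 2))) : Prop :=
  IsIsotropic V ∧ ∀ W, IsIsotropic W → V ≤ W → W = V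

/-- The joint `+1` eigenspace of the spinors `σ(a,b)` for `(a,b) ∈ V`, as a
`ℂ`-subspace of `ℂ^(2^p)`. -/
noncomputable def stabSpace {p : ℕ}
    (V : Submodule (ZMod 2) ((Fin p → ZMod 2) × (Fin p → ZMod 2))) :
    Submodule ℂ ((Fin p → ZMod 2) → ℂ) where
  carrier := {ψ | ∀ u ∈ V, (pauli u.1 u.2).mulVec ψ = ψ}
  add_mem' := by
    intro ψ φ hψ hφ u hu
    rw [Matrix.mulVec_add, hψ u hu, hφ u hu]
  zero_mem' := by
    intro u hu
    rw [Matrix.mulVec_zero]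
  smul_mem' := by
    intro c ψ hψ u hu
    rw [Matrix.mulVec_smul, hψ u hu]

lemma dotp_comm {p : ℕ} (a b : Fin p → ZMod 2) : dotp a b = dotp b a := by
  simp [dotp, mul_comm]

lemma dotp_zero_right {p : ℕ} (a : Fin p → ZMod 2) : dotp a 0 = 0 := by simp [dotp]

lemma dotp_add_right {p : ℕ} (a b c : Fin p → ZMod 2) :
    dotp a (b + c) = dotp a b + dotp a c := by
  simp [dotp, mul_add, Finset.sum_add_distrib]

lemma pauli_mulVec {p : ℕ} (a b : Fin p → ZMod 2) (ψ : (Fin p → ZMod 2) → ℂ)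
    (x : Fin p → ZMod 2) :
    (pauli a b).mulVec ψ x = sgn (dotp b x) * ψ (x + a) := by
  simp [Matrix.mulVec, dotProduct, pauli, ite_mul, Finset.sum_ite_eq']


lemma dotp_add_left {p : ℕ} (a b c : Fin p → ZMod 2) :
    dotp (a + b) c = dotp a c + dotp b c := by
  simp [dotp, add_mul, Finset.sum_add_distrib]

lemma dotp_smul_right {p : ℕ} (a : Fin p → ZMod 2) (t : ZMod 2) (b : Fin p → ZMod 2) :
    dotp a (t • b) = t * dotp a b := by
  simp [dotp, Finset.mul_sum, mul_left_comm]

/-- dotp as a linear map in the second argument. -/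
noncomputable def dotpL {p : ℕ} (a : Fin p → ZMod 2) : (Fin p → ZMod 2) →ₗ[ZMod 2] ZMod 2 where
  toFun b := dotp a b
  map_add' b c := dotp_add_right a b c
  map_smul' t b := dotp_smul_right a t b

lemma omegaF_add_left {p : ℕ} (u v w : (Fin p → ZMod 2) × (Fin p → ZMod 2)) :
    omegaF (u + v) w = omegaF u w + omegaF v w := by
  simp only [omegaF, Prod.fst_add, Prod.snd_add, dotp_add_left, dotp_add_right]
  ring

lemma omegaF_add_right {p : ℕ} (u v w : (Fin p → ZMod 2) × (Fin p → ZMod 2)) :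
    omegaF u (v + w) = omegaF u v + omegaF u w := by
  simp only [omegaF, Prod.fst_add, Prod.snd_add, dotp_add_left, dotp_add_right]
  ring

lemma zmod2_cases : ∀ t : ZMod 2, t = 0 ∨ t = 1 := by decide

lemma zmod2_add_self : ∀ t : ZMod 2, t + t = 0 := by decide

/-- Key lemma: if `x` is orthogonal to all `b` with `(0,b) ∈ V` and `V` is maximal
isotropic, then `x` appears as a first component in `V`. -/
lemma exists_partner {p : ℕ}
    (V : Submodule (ZMod 2) ((Fin p → ZMod 2) × (Fin p → ZMod 2)))
    (hV : IsMaxIsotropic V) (x : Fin p → ZMod 2)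
    (hx : ∀ b, ((0 : Fin p → ZMod 2), b) ∈ V → dotp b x = 0) :
    ∃ c, (x, c) ∈ V := by
  classical
  -- the functional u ↦ x ⬝ u.2 on V
  set f : V →ₗ[ZMod 2] ZMod 2 :=
    (dotpL x).comp ((LinearMap.snd (ZMod 2) _ _).comp V.subtype) with hf
  set π : V →ₗ[ZMod 2] (Fin p → ZMod 2) :=
    (LinearMap.fst (ZMod 2) _ _).comp V.subtype with hπ
  have hker : LinearMap.ker π ≤ LinearMap.ker f := by
    intro u hu
    have h1 : (u : (Fin p → ZMod 2) × (Fin p → ZMod 2)).1 = 0 := hu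
    have h2 : ((0 : Fin p → ZMod 2), (u : (Fin p → ZMod 2) × (Fin p → ZMod 2)).2) ∈ V := by
      rw [← h1]; exact u.2
    have := hx _ h2
    simp only [LinearMap.mem_ker, hf, LinearMap.comp_apply, LinearMap.snd_apply,
      Submodule.coe_subtype, dotpL, LinearMap.coe_mk, AddHom.coe_mk]
    rw [dotp_comm]; exact this
  -- factor f through the range of π and extend to the whole space
  obtain ⟨g, hg⟩ := LinearMap.exists_extend
    (((LinearMap.ker π).liftQ f hker).comp (LinearMap.quotKerEquivRange π).symm.toLinearMap)
  have hgval : ∀ u : V, g ((u : (Fin p → ZMod 2) × (Fin p → ZMod 2)).1)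
      = dotp x (u : (Fin p → ZMod 2) × (Fin p → ZMod 2)).2 := by
    intro u
    have hmem : (u : (Fin p → ZMod 2) × (Fin p → ZMod 2)).1 ∈ LinearMap.range π :=
      ⟨u, rfl⟩
    have := LinearMap.congr_fun hg ⟨_, hmem⟩
    simp only [LinearMap.comp_apply, Submodule.coe_subtype] at this
    rw [this]
    have hsymm : (LinearMap.quotKerEquivRange π).symm ⟨_, hmem⟩
        = Submodule.Quotient.mk u := by
      rw [LinearEquiv.symm_apply_eq]
      exact Subtype.ext (LinearMap.quotKerEquivRange_apply_mk π u).symm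
    simp only [LinearEquiv.coe_coe, hsymm, Submodule.liftQ_apply]
    simp [f, dotpL]
  set c : Fin p → ZMod 2 := fun i => g (fun j => if i = j then 1 else 0) with hc
  have hcg : ∀ a, dotp c a = g a := by
    intro a
    conv_rhs => rw [pi_eq_sum_univ a, map_sum]
    simp only [_root_.map_smul, smul_eq_mul, dotp, hc]
    exact Finset.sum_congr rfl fun i _ => mul_comm _ _
  have hvc : ∀ v ∈ V, dotp c (Prod.fst v) = dotp x v.2 := by
    intro v hv
    rw [hcg]
    exact hgval ⟨v, hv⟩
  have hself : omegaF ((x, c) : (Fin p → ZMod 2) × (Fin p → ZMod 2)) (x, c) = 0 := by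
    simp only [omegaF]
    rw [dotp_comm c x]
    exact zmod2_add_self _
  have hcross1 : ∀ v ∈ V, omegaF ((x, c) : (Fin p → ZMod 2) × (Fin p → ZMod 2)) v = 0 := by
    intro v hv
    simp only [omegaF]
    rw [hvc v hv]
    exact zmod2_add_self _
  have hcross2 : ∀ v ∈ V, omegaF v ((x, c) : (Fin p → ZMod 2) × (Fin p → ZMod 2)) = 0 := by
    intro v hv
    simp only [omegaF]
    rw [dotp_comm v.1 c, hvc v hv, dotp_comm v.2 x]
    exact zmod2_add_self _
  set W := V ⊔ Submodule.span (ZMod 2) {((x, c) : (Fin p → ZMod 2) × (Fin p → ZMod 2))}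
    with hWdef
  have hWiso : IsIsotropic W := by
    intro u hu v hv
    rw [hWdef, Submodule.mem_sup] at hu hv
    obtain ⟨u₀, hu₀, zu, hzu, rfl⟩ := hu
    obtain ⟨v₀, hv₀, zv, hzv, rfl⟩ := hv
    rw [Submodule.mem_span_singleton] at hzu hzv
    obtain ⟨s, rfl⟩ := hzu
    obtain ⟨t, rfl⟩ := hzv
    rcases zmod2_cases s with rfl | rfl <;> rcases zmod2_cases t with rfl | rfl <;>
      simp only [zero_smul, one_smul, add_zero, omegaF_add_left, omegaF_add_right] <;>
      simp [hV.1 u₀ hu₀ v₀ hv₀, hcross1 v₀ hv₀, hcross2 u₀ hu₀, hself]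
  have hWV : W = V := hV.2 W hWiso le_sup_left
  have hmem' : ((x, c) : (Fin p → ZMod 2) × (Fin p → ZMod 2)) ∈ W := by
    rw [hWdef]
    exact Submodule.mem_sup_right (Submodule.mem_span_singleton_self _)
  rw [hWV] at hmem'
  exact ⟨c, hmem'⟩

lemma sgn_zero' : sgn 0 = 1 := by norm_num [sgn]

lemma sgn_one' : sgn 1 = -1 := by norm_num [sgn, show ((1 : ZMod 2)).val = 1 from rfl]

lemma stab_eq_zero_of_eval_zero {p : ℕ}
    (V : Submodule (ZMod 2) ((Fin p → ZMod 2) × (Fin p → ZMod 2)))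
    (hV : IsMaxIsotropic V) (ψ : (Fin p → ZMod 2) → ℂ)
    (hψ : ∀ u ∈ V, (pauli u.1 u.2).mulVec ψ = ψ) (h0 : ψ 0 = 0) : ψ = 0 := by
  classical
  funext x
  have heval : ∀ a b, (a, b) ∈ V → ∀ z, sgn (dotp b z) * ψ (z + a) = ψ z := by
    intro a b hab z
    have := congrFun (hψ (a, b) hab) z
    rw [← this, pauli_mulVec]
  by_cases hcase : ∀ b, ((0 : Fin p → ZMod 2), b) ∈ V → dotp b x = 0
  · obtain ⟨c, hc⟩ := exists_partner V hV x hcase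
    have h := heval x c hc 0
    rw [dotp_zero_right, sgn_zero', one_mul, zero_add, h0] at h
    exact h
  · push_neg at hcase
    obtain ⟨b, hb, hbx⟩ := hcase
    have hbx1 : dotp b x = 1 := (zmod2_cases _).resolve_left hbx
    have h := heval 0 b hb x
    rw [hbx1, add_zero, sgn_one'] at h
    have h2 : ψ x + ψ x = 0 := by linear_combination -h
    exact add_self_eq_zero.mp h2

/-- For a maximal isotropic subspace `V`, the joint `+1` eigenspace
`{ψ | ∀ (a,b) ∈ V, σ(a,b).mulVec ψ = ψ}` has dimension at most 1: a stabilizer state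
determined by a Cartanion is unique up to scalar when it exists. -/
theorem stabSpace_rank_le_one {p : ℕ} (hp : 1 ≤ p)
    (V : Submodule (ZMod 2) ((Fin p → ZMod 2) × (Fin p → ZMod 2)))
    (hV : IsMaxIsotropic V) :
    Module.rank ℂ (stabSpace V) ≤ 1 := by
  classical
  let f : stabSpace V →ₗ[ℂ] ℂ :=
    (LinearMap.proj (0 : Fin p → ZMod 2)).comp (stabSpace V).subtype
  have hker : LinearMap.ker f = ⊥ := by
    rw [LinearMap.ker_eq_bot']
    intro ψ hψ0
    have hmem : ∀ u ∈ V, (pauli u.1 u.2).mulVec ψ.1 = ψ.1 := ψ.2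
    exact Subtype.ext (stab_eq_zero_of_eval_zero V hV ψ.1 hmem hψ0)
  have hinj : Function.Injective f := LinearMap.ker_eq_bot.mp hker
  calc Module.rank ℂ (stabSpace V) ≤ Module.rank ℂ ℂ := f.rank_le_of_injective hinj
    _ = 1 := Module.rank_self ℂ
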